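/- Let s_1 and s_2 be coprime positive integers with s_1 ≥ 6 or s_2 ≥ 6. Then there exist points (x, y) and (x', y') in the open square (0, 1/3)^2 ⊂ ℝ^2 such that s_1x + s_2y and s_1x' + s_2y' are two distinct positive integers. Consequently, the intersection of Γ_{s_1,s_2} with Π_3 meets the images of at least two distinct lines {(x,y) : s_1x + s_2y = k}, k ∈ ℤ; in particular it has at least two connected components. -/

import Mathlib

noncomputable section

/-- The two-dimensional torus `T² = (ℝ/ℤ)²`. -/
abbrev T2 := AddCircle (1 : ℝ) × AddCircle (1 : ℝ)

/-- The subgroup `Γ_{s₁,s₂} = {(θ₁, θ₂) ∈ T² : s₁θ₁ + s₂θ₂ = 0}`. -/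
def GammaSlope (s1 s2 : ℤ) : Set T2 := {θ : T2 | s1 • θ.1 + s2 • θ.2 = 0}

/-- `Π_r ⊂ T²`, the image under `q` of the open square `(0, 1/r)²`. -/
def PiSquare (r : ℕ) : Set T2 :=
  {θ : T2 | ∃ x y : ℝ, 0 < x ∧ x < 1 / (r : ℝ) ∧ 0 < y ∧ y < 1 / (r : ℝ) ∧
    θ = ((x : AddCircle (1 : ℝ)), (y : AddCircle (1 : ℝ)))}

lemma mem_gammaSlope_of_eq_int (s1 s2 k : ℤ) (x y : ℝ)
    (h : (s1 : ℝ) * x + (s2 : ℝ) * y = (k : ℝ)) :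
    ((x : AddCircle (1 : ℝ)), (y : AddCircle (1 : ℝ))) ∈ GammaSlope s1 s2 := by
  simp only [GammaSlope, Set.mem_setOf_eq]
  have key : s1 • ((x : ℝ) : AddCircle (1 : ℝ)) + s2 • ((y : ℝ) : AddCircle (1 : ℝ))
      = (((s1 : ℝ) * x + (s2 : ℝ) * y : ℝ) : AddCircle (1 : ℝ)) := by
    rw [← QuotientAddGroup.mk_zsmul, ← QuotientAddGroup.mk_zsmul, ← QuotientAddGroup.mk_add]
    norm_num [zsmul_eq_mul]
  rw [key, h, AddCircle.coe_eq_zero_iff]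
  exact ⟨k, by simp⟩

/-- If `s₁, s₂` are coprime positive integers with `s₁ ≥ 6` or `s₂ ≥ 6`, then there are
points `(x, y)` and `(x', y')` in the open square `(0, 1/3)²` such that `s₁x + s₂y` and
`s₁x' + s₂y'` are two distinct positive integers; consequently `Γ_{s₁,s₂} ∩ Π₃` meets the
images of two distinct lines `{s₁x + s₂y = k}`. -/
theorem gammaSlope_inter_piSquare_two_lines
    (s1 s2 : ℤ) (h1 : 0 < s1) (h2 : 0 < s2) (hco : IsCoprime s1 s2)
    (h6 : 6 ≤ s1 ∨ 6 ≤ s2) :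
    ∃ (x y x' y' : ℝ) (k k' : ℤ),
      0 < x ∧ x < 1 / 3 ∧ 0 < y ∧ y < 1 / 3 ∧
      0 < x' ∧ x' < 1 / 3 ∧ 0 < y' ∧ y' < 1 / 3 ∧
      0 < k ∧ 0 < k' ∧ k ≠ k' ∧
      (s1 : ℝ) * x + (s2 : ℝ) * y = (k : ℝ) ∧
      (s1 : ℝ) * x' + (s2 : ℝ) * y' = (k' : ℝ) ∧
      ((x : AddCircle (1 : ℝ)), (y : AddCircle (1 : ℝ))) ∈ GammaSlope s1 s2 ∩ PiSquare 3 ∧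
      ((x' : AddCircle (1 : ℝ)), (y' : AddCircle (1 : ℝ))) ∈ GammaSlope s1 s2 ∩ PiSquare 3 := by
  have hint : (7 : ℤ) ≤ s1 + s2 := by omega
  set d : ℝ := (s1 : ℝ) + (s2 : ℝ) with hdDef
  have hd7 : (7 : ℝ) ≤ d := by rw [hdDef]; exact_mod_cast hint
  have hd0 : (0 : ℝ) < d := by linarith
  have hx1 : (0 : ℝ) < 1 / d := by positivity
  have hx1' : 1 / d < 1 / 3 := by
    rw [div_lt_div_iff₀ hd0 (by norm_num)]; linarith
  have hx2 : (0 : ℝ) < 2 / d := by positivity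
  have hx2' : 2 / d < 1 / 3 := by
    rw [div_lt_div_iff₀ hd0 (by norm_num)]; linarith
  have heq1 : (s1 : ℝ) * (1 / d) + (s2 : ℝ) * (1 / d) = ((1 : ℤ) : ℝ) := by
    field_simp
    push_cast; linarith
  have heq2 : (s1 : ℝ) * (2 / d) + (s2 : ℝ) * (2 / d) = ((2 : ℤ) : ℝ) := by
    field_simp; ring
  refine ⟨1 / d, 1 / d, 2 / d, 2 / d, 1, 2, hx1, hx1', hx1, hx1', hx2, hx2', hx2, hx2',
    one_pos, two_pos, by norm_num, heq1, heq2,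
    ⟨mem_gammaSlope_of_eq_int s1 s2 1 _ _ heq1, ?_⟩,
    ⟨mem_gammaSlope_of_eq_int s1 s2 2 _ _ heq2, ?_⟩⟩
  · exact ⟨1 / d, 1 / d, hx1, by simpa using hx1', hx1, by simpa using hx1', rfl⟩
  · exact ⟨2 / d, 2 / d, hx2, by simpa using hx2', hx2, by simpa using hx2', rfl⟩
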